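/- arXiv:1704.01310 — 9 statements merged into one kernel-verified Lean document; each statement's English description precedes it below -/
import Mathlib

section
/- Let κ, μ, a be real numbers with κ < 1 and a > 0, and set κ̄ := (κ + a² − 1)/a² and μ̄ := (μ + 2a − 2)/a. Then κ̄ < 1 and (1 − μ̄/2)/√(1 − κ̄) = (1 − μ/2)/√(1 − κ). -/
theorem boeckx_invariant_D_homothetic_invariance
    (κ μ a : ℝ) (hκ : κ < 1) (ha : 0 < a)
    (κbar μbar : ℝ)
    (hκbar : κbar = (κ + a ^ 2 - 1) / a ^ 2)
    (hμbar : μbar = (μ + 2 * a - 2) / a) :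
    κbar < 1 ∧
      (1 - μbar / 2) / Real.sqrt (1 - κbar) = (1 - μ / 2) / Real.sqrt (1 - κ) := by
  have ha2 : (0:ℝ) < a ^ 2 := by positivity
  have h1 : 1 - κbar = (1 - κ) / a ^ 2 := by
    rw [hκbar]; field_simp; ring
  have hpos : 0 < (1 - κ) / a ^ 2 := div_pos (by linarith) ha2
  have hlt : κbar < 1 := by linarith [h1 ▸ hpos]
  refine ⟨hlt, ?_⟩
  have hs : Real.sqrt (1 - κbar) = Real.sqrt (1 - κ) / a := by
    rw [h1, Real.sqrt_div (by linarith), Real.sqrt_sq ha.le]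
  have h2 : 1 - μbar / 2 = (1 - μ / 2) / a := by
    rw [hμbar]; field_simp; ring
  have hsq : 0 < Real.sqrt (1 - κ) := Real.sqrt_pos.mpr (by linarith)
  rw [hs, h2]; field_simp
end

section
/- Let E be a real inner product space and define the trilinear map T : E × E × E → E by T(x,y)z := ⟨x,z⟩y − ⟨x,y⟩z − ⟨y,z⟩x. Then T is a Jordan triple product, i.e., it satisfies (JT1) T(x,y)z = T(z,y)x for all x,y,z ∈ E, and (JT2) T(u,v)(T(x,y)z) = T(T(u,v)x, y)z − T(x, T(v,u)y)z + T(x,y)(T(u,v)z) for all u,v,x,y,z ∈ E. -/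
open scoped RealInnerProductSpace

/-- The map `T(x,y)z = ⟨x,z⟩y − ⟨x,y⟩z − ⟨y,z⟩x` on a real inner product space
is a Jordan triple product. -/
theorem sphere_jordan_extension_is_jordan_triple
    (E : Type*) [NormedAddCommGroup E] [InnerProductSpace ℝ E]
    (T : E → E → E → E)
    (hT : ∀ x y z : E, T x y z = ⟪x, z⟫ • y - ⟪x, y⟫ • z - ⟪y, z⟫ • x) :
    (∀ x y z : E, T x y z = T z y x) ∧
    (∀ u v x y z : E,
      T u v (T x y z) = T (T u v x) y z - T x (T v u y) z + T x y (T u v z)) := by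
  constructor
  · intro x y z
    simp only [hT, real_inner_comm z y, real_inner_comm z x, real_inner_comm y x]
    module
  · intro u v x y z
    simp only [hT, inner_sub_left, inner_sub_right, real_inner_smul_left,
      real_inner_smul_right, smul_sub, sub_smul, add_smul, smul_smul,
      real_inner_comm v u, real_inner_comm x u, real_inner_comm x v,
      real_inner_comm y u, real_inner_comm y v, real_inner_comm y x,
      real_inner_comm z u, real_inner_comm z v, real_inner_comm z x,
      real_inner_comm z y]
    module
end

section
/- Fix n ≥ 1 and α > 0. In real (2+n)×(2+n) matrices in 2+n block form, let ξ := fromBlocks S 0 0 0 where S := [[0,−1],[1,0]], and for v,w ∈ ℝⁿ let B(v,w) := fromBlocks 0 (−C(v,w)ᵀ) C(v,w) 0, where C(v,w) is the n×2 matrix with columns v and w. Then for all v,w ∈ ℝⁿ, with respect to the matrix commutator: (i) [ξ, B(v,w)] = B(−w, v); (ii) [ξ, B(−(1/α)w, αv)] − B(−(1/α)v, −αw) = ((1−α²)/α)·B(v, −w). In particular the left-hand side of (ii) vanishes for all v,w ∈ ℝⁿ if and only if α = 1. -/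
open Matrix

/-- The matrix `ξ = fromBlocks S 0 0 0` with `S = [[0,−1],[1,0]]`. -/
noncomputable def xiMat (n : ℕ) : Matrix (Fin 2 ⊕ Fin n) (Fin 2 ⊕ Fin n) ℝ :=
  fromBlocks !![(0 : ℝ), -1; 1, 0] 0 0 0

/-- The `n×2` matrix with columns `v` and `w`. -/
def colMat (n : ℕ) (v w : Fin n → ℝ) : Matrix (Fin n) (Fin 2) ℝ :=
  Matrix.of fun i j => ![v i, w i] j

/-- The matrix `B(v,w) = fromBlocks 0 (−C(v,w)ᵀ) (C(v,w)) 0`. -/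
noncomputable def BMat (n : ℕ) (v w : Fin n → ℝ) :
    Matrix (Fin 2 ⊕ Fin n) (Fin 2 ⊕ Fin n) ℝ :=
  fromBlocks 0 (-(colMat n v w)ᵀ) (colMat n v w) 0

lemma key (n : ℕ) (v w : Fin n → ℝ) :
    xiMat n * BMat n v w - BMat n v w * xiMat n = BMat n (-w) v := by
  ext i j
  cases i <;> cases j <;>
    simp [xiMat, BMat, colMat, Matrix.mul_apply, Fintype.sum_sum_type,
      Fin.sum_univ_two, fromBlocks] <;>
    rename_i a b <;> first | (fin_cases a <;> simp) | (fin_cases b <;> simp)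

lemma BMat_sub (n : ℕ) (v w v' w' : Fin n → ℝ) :
    BMat n v w - BMat n v' w' = BMat n (v - v') (w - w') := by
  ext i j
  cases i <;> cases j <;>
    simp [BMat, colMat, fromBlocks] <;>
    rename_i a b <;> first | (fin_cases a <;> simp <;> ring) | (fin_cases b <;> simp <;> ring)

lemma BMat_smul (n : ℕ) (c : ℝ) (v w : Fin n → ℝ) :
    c • BMat n v w = BMat n (c • v) (c • w) := by
  ext i j
  cases i <;> cases j <;>
    simp [BMat, colMat, fromBlocks] <;>
    rename_i a b <;> first | (fin_cases a <;> simp <;> ring) | (fin_cases b <;> simp <;> ring)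

/-- Computation of `2h = L_ξ φ` on `SO(n+2)/SO(n)`: the structure is
`K`-contact iff `α = 1`. -/
theorem h_tensor_so_n_plus_two (n : ℕ) (hn : 1 ≤ n) (α : ℝ) (hα : 0 < α) :
    (∀ v w : Fin n → ℝ,
      xiMat n * BMat n v w - BMat n v w * xiMat n = BMat n (-w) v) ∧
    (∀ v w : Fin n → ℝ,
      (xiMat n * BMat n (-((1 / α) • w)) (α • v) -
        BMat n (-((1 / α) • w)) (α • v) * xiMat n) -
        BMat n (-((1 / α) • v)) (-(α • w)) =
      ((1 - α ^ 2) / α) • BMat n v (-w)) ∧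
    ((∀ v w : Fin n → ℝ,
      (xiMat n * BMat n (-((1 / α) • w)) (α • v) -
        BMat n (-((1 / α) • w)) (α • v) * xiMat n) -
        BMat n (-((1 / α) • v)) (-(α • w)) = 0) ↔ α = 1) := by
  have hα' : α ≠ 0 := ne_of_gt hα
  have part2 : ∀ v w : Fin n → ℝ,
      (xiMat n * BMat n (-((1 / α) • w)) (α • v) -
        BMat n (-((1 / α) • w)) (α • v) * xiMat n) -
        BMat n (-((1 / α) • v)) (-(α • w)) =
      ((1 - α ^ 2) / α) • BMat n v (-w) := by
    intro v w
    rw [key, BMat_sub, BMat_smul]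
    have h1 : -(α • v) - -((1 / α) • v) = ((1 - α ^ 2) / α) • v := by
      funext i; simp; field_simp; ring
    have h2 : -((1 / α) • w) - -(α • w) = ((1 - α ^ 2) / α) • (-w) := by
      funext i; simp; field_simp; ring
    rw [h1, h2]
  refine ⟨key n, part2, ?_⟩
  constructor
  · intro h
    have h0 := h (fun _ => 1) 0
    rw [part2] at h0
    have h1 := congrFun (congrFun h0 (Sum.inr ⟨0, hn⟩)) (Sum.inl 0)
    simp [BMat, colMat, fromBlocks] at h1
    have : α ^ 2 = 1 := by
      rcases h1 with h1 | h1
      · linarith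
      · exact absurd h1 hα'
    nlinarith
  · intro hα1
    subst hα1
    intro v w
    rw [part2]
    norm_num
end

section
/- Let λ > 0 and μ ∈ ℝ, and set I := (1 − μ/2)/λ. Then there exists a > 0 with a²(2 − μ − 2λ) = 2 − μ + 2λ if and only if |I| > 1; moreover, in that case such a is unique and equals √((I+1)/(I−1)). -/
theorem standard_complex_structure_parameter
    (lam μ I : ℝ) (hlam : 0 < lam) (hI : I = (1 - μ / 2) / lam) :
    ((∃ a : ℝ, 0 < a ∧ a ^ 2 * (2 - μ - 2 * lam) = 2 - μ + 2 * lam) ↔ 1 < |I|) ∧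
    (∀ a : ℝ, 0 < a → a ^ 2 * (2 - μ - 2 * lam) = 2 - μ + 2 * lam →
      a = Real.sqrt ((I + 1) / (I - 1))) := by
  have hlam' : lam ≠ 0 := ne_of_gt hlam
  have h2l : (2 * lam) ≠ 0 := by positivity
  have h1 : 2 - μ - 2 * lam = 2 * lam * (I - 1) := by
    rw [hI]; field_simp
  have h2 : 2 - μ + 2 * lam = 2 * lam * (I + 1) := by
    rw [hI]; field_simp
  have key : ∀ a : ℝ, a ^ 2 * (2 - μ - 2 * lam) = 2 - μ + 2 * lam →
      a ^ 2 * (I - 1) = I + 1 := by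
    intro a heq
    rw [h1, h2] at heq
    apply mul_left_cancel₀ h2l
    linear_combination heq
  constructor
  · constructor
    · rintro ⟨a, ha, heq⟩
      have k := key a heq
      by_contra hcon
      push_neg at hcon
      rw [abs_le] at hcon
      have hle : a ^ 2 * (I - 1) ≤ 0 :=
        mul_nonpos_of_nonneg_of_nonpos (sq_nonneg a) (by linarith [hcon.2])
      have hIm : I = -1 := by linarith [hcon.1, k ▸ hle]
      rw [hIm] at k
      nlinarith [mul_pos ha ha]
    · intro hI1
      have hq : 0 < (I + 1) / (I - 1) := by
        rcases lt_abs.mp hI1 with h | h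
        · exact div_pos (by linarith) (by linarith)
        · exact div_pos_of_neg_of_neg (by linarith) (by linarith)
      refine ⟨Real.sqrt ((I + 1) / (I - 1)), Real.sqrt_pos.mpr hq, ?_⟩
      have hsq : Real.sqrt ((I + 1) / (I - 1)) ^ 2 = (I + 1) / (I - 1) :=
        Real.sq_sqrt hq.le
      have hIne : I - 1 ≠ 0 := by
        rcases lt_abs.mp hI1 with h | h
        · intro h0; linarith
        · intro h0; linarith
      rw [h1, h2, hsq]
      field_simp
  · intro a ha heq
    have k := key a heq
    have hIne : I ≠ 1 := by
      rintro rfl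
      simp at k
      nlinarith
    have hsub : I - 1 ≠ 0 := sub_ne_zero.mpr hIne
    have hsq : a ^ 2 = (I + 1) / (I - 1) := by
      rw [eq_div_iff hsub]; exact k
    rw [← hsq, Real.sqrt_sq ha.le]
end

section
/- Let n ≥ 1, E = ℝⁿ with standard inner product, V = E × E with inner product g((v,w),(u,z)) = ⟨v,u⟩ + ⟨w,z⟩, and for real κ < 1, μ ∈ ℝ, λ := √(1−κ), define φ(v,w) := (−w, v), h(v,w) := (λv, −λw), and the trilinear map R̄ : V×V×V → V by R̄(X,Y)Z = ((1−μ/2)g(Y,Z)+g(hY,Z))X − ((1−μ/2)g(X,Z)+g(hX,Z))Y + (((1−μ/2)/(1−κ))g(hY,Z)+g(Y,Z))hX − (((1−μ/2)/(1−κ))g(hX,Z)+g(X,Z))hY + ((1−μ/2)g(φY,Z)+g(φhY,Z))φX − ((1−μ/2)g(φX,Z)+g(φhX,Z))φY + (((1−μ/2)/(1−κ))g(φhY,Z)+g(φY,Z))φhX − (((1−μ/2)/(1−κ))g(φhX,Z)+g(φX,Z))φhY + (μ−2)g(φX,Y)φZ − 2g(φX,Y)φhZ. Then the linear map τ := (1/λ)·h,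 i.e. τ(v,w) = (v,−w), satisfies τ∘τ = id and R̄(τX, τY)(τZ) = τ(R̄(X,Y)Z) for all X,Y,Z ∈ V. -/
open scoped RealInnerProductSpace

/-- The model vector space `V = ℝⁿ × ℝⁿ` for the tangent space of the base
space of the canonical fibration. -/
abbrev modelV (n : ℕ) := EuclideanSpace ℝ (Fin n) × EuclideanSpace ℝ (Fin n)

/-- The inner product `g((v,w),(u,z)) = ⟨v,u⟩ + ⟨w,z⟩` on `V = ℝⁿ × ℝⁿ`. -/
noncomputable def gV (n : ℕ) (X Y : modelV n) : ℝ :=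
  ⟪X.1, Y.1⟫ + ⟪X.2, Y.2⟫

/-- The tensor `φ(v,w) = (−w, v)` on `V = ℝⁿ × ℝⁿ`. -/
def phiV (n : ℕ) (X : modelV n) : modelV n := (-X.2, X.1)

/-- The tensor `h(v,w) = (λv, −λw)` on `V = ℝⁿ × ℝⁿ`, `λ = √(1−κ)`. -/
noncomputable def hV (n : ℕ) (κ : ℝ) (X : modelV n) : modelV n :=
  (Real.sqrt (1 - κ) • X.1, -(Real.sqrt (1 - κ) • X.2))

/-- The curvature tensor of the canonical connection of the base space of the
canonical fibration of a non-Sasakian contact metric `(κ,μ)`-space, realized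
on the model `V = ℝⁿ × ℝⁿ`. -/
noncomputable def Rbar (n : ℕ) (κ μ : ℝ) (X Y Z : modelV n) : modelV n :=
  ((1 - μ / 2) * gV n Y Z + gV n (hV n κ Y) Z) • X
  - ((1 - μ / 2) * gV n X Z + gV n (hV n κ X) Z) • Y
  + (((1 - μ / 2) / (1 - κ)) * gV n (hV n κ Y) Z + gV n Y Z) • hV n κ X
  - (((1 - μ / 2) / (1 - κ)) * gV n (hV n κ X) Z + gV n X Z) • hV n κ Y
  + ((1 - μ / 2) * gV n (phiV n Y) Z + gV n (phiV n (hV n κ Y)) Z) • phiV n X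
  - ((1 - μ / 2) * gV n (phiV n X) Z + gV n (phiV n (hV n κ X)) Z) • phiV n Y
  + (((1 - μ / 2) / (1 - κ)) * gV n (phiV n (hV n κ Y)) Z + gV n (phiV n Y) Z)
      • phiV n (hV n κ X)
  - (((1 - μ / 2) / (1 - κ)) * gV n (phiV n (hV n κ X)) Z + gV n (phiV n X) Z)
      • phiV n (hV n κ Y)
  + ((μ - 2) * gV n (phiV n X) Y) • phiV n Z
  - (2 * gV n (phiV n X) Y) • phiV n (hV n κ Z)

/-- `τ = (1/λ)h : (v,w) ↦ (v,−w)` is an involutive automorphism of the Lie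
triple system of the base space. -/
theorem tau_is_involutive_automorphism (n : ℕ) (hn : 1 ≤ n) (κ μ : ℝ) (hκ : κ < 1)
    (τ : modelV n → modelV n) (hτ : ∀ X, τ X = (X.1, -X.2)) :
    (∀ X, τ (τ X) = X) ∧
    (∀ X Y Z, Rbar n κ μ (τ X) (τ Y) (τ Z) = τ (Rbar n κ μ X Y Z)) := by
  constructor
  · intro X; simp [hτ]
  · intro X Y Z
    simp only [Rbar, gV, phiV, hV, hτ, Prod.fst_add, Prod.snd_add, Prod.fst_sub,
      Prod.snd_sub, Prod.smul_fst, Prod.smul_snd, Prod.mk.injEq, Prod.ext_iff,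
      inner_neg_left, inner_neg_right, real_inner_smul_left, real_inner_smul_right,
      smul_neg, neg_neg]
    constructor <;> module
end

section
/- Let n ≥ 1, E = ℝⁿ with standard inner product, V = E × E with inner product g((v,w),(u,z)) = ⟨v,u⟩ + ⟨w,z⟩, and for real κ < 1, μ ∈ ℝ, λ := √(1−κ), define φ(v,w) := (−w, v), h(v,w) := (λv, −λw), and the trilinear map R̄ : V×V×V → V by R̄(X,Y)Z = ((1−μ/2)g(Y,Z)+g(hY,Z))X − ((1−μ/2)g(X,Z)+g(hX,Z))Y + (((1−μ/2)/(1−κ))g(hY,Z)+g(Y,Z))hX − (((1−μ/2)/(1−κ))g(hX,Z)+g(X,Z))hY + ((1−μ/2)g(φY,Z)+g(φhY,Z))φX − ((1−μ/2)g(φX,Z)+g(φhX,Z))φY + (((1−μ/2)/(1−κ))g(φhY,Z)+g(φY,Z))φhX − (((1−μ/2)/(1−κ))g(φhX,Z)+g(φX,Z))φhY + (μ−2)g(φX,Y)φZ − 2g(φX,Y)φhZ. Then for all x, y, z ∈ E, writing X = (x,0), Y = (y,0), Z = (z,0), one has R̄(X,Y)Z = (2 − μ + 2λ)·(⟨y,z⟩·(x,0)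 − ⟨x,z⟩·(y,0)). -/
open scoped RealInnerProductSpace

/-- The restriction of `R̄` to the `+λ` eigenspace `b₊ = E × {0}` has constant
curvature `2 − μ + 2λ`. -/
theorem Rbar_restricted_to_plus_eigenspace (n : ℕ) (hn : 1 ≤ n) (κ μ : ℝ)
    (hκ : κ < 1) :
    ∀ x y z : EuclideanSpace ℝ (Fin n),
      Rbar n κ μ (x, 0) (y, 0) (z, 0) =
        (2 - μ + 2 * Real.sqrt (1 - κ)) •
          (⟪y, z⟫ • ((x, 0) : modelV n) - ⟪x, z⟫ • ((y, 0) : modelV n)) := by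
  intro x y z
  have h1 : (1:ℝ) - κ ≠ 0 := by linarith
  have hl : Real.sqrt (1 - κ) * Real.sqrt (1 - κ) = 1 - κ :=
    Real.mul_self_sqrt (by linarith)
  simp only [Rbar, gV, phiV, hV, Prod.fst, Prod.snd, Prod.mk.injEq, Prod.ext_iff,
    Prod.smul_mk, Prod.neg_mk, Prod.fst_add, Prod.snd_add, Prod.fst_sub, Prod.snd_sub,
    inner_zero_left, inner_zero_right, add_zero, zero_add, smul_zero, neg_zero,
    inner_smul_left, inner_smul_right, RCLike.ofReal_real_eq_id, id_eq,
    inner_neg_left, inner_neg_right, smul_neg, mul_zero, zero_mul, sub_zero,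
    zero_smul, smul_eq_mul, Prod.smul_def]
  constructor
  · set l := Real.sqrt (1 - κ) with hldef
    match_scalars <;> field_simp <;> simp only [← hl, conj_trivial] <;> ring
  · simp
end

section
/- Let n ≥ 1, E = ℝⁿ with standard inner product, V = E × E with inner product g((v,w),(u,z)) = ⟨v,u⟩ + ⟨w,z⟩, and for real κ < 1, μ ∈ ℝ, λ := √(1−κ), define φ(v,w) := (−w, v), h(v,w) := (λv, −λw), and the trilinear map R̄ : V×V×V → V by R̄(X,Y)Z = ((1−μ/2)g(Y,Z)+g(hY,Z))X − ((1−μ/2)g(X,Z)+g(hX,Z))Y + (((1−μ/2)/(1−κ))g(hY,Z)+g(Y,Z))hX − (((1−μ/2)/(1−κ))g(hX,Z)+g(X,Z))hY + ((1−μ/2)g(φY,Z)+g(φhY,Z))φX − ((1−μ/2)g(φX,Z)+g(φhX,Z))φY + (((1−μ/2)/(1−κ))g(φhY,Z)+g(φY,Z))φhX − (((1−μ/2)/(1−κ))g(φhX,Z)+g(φX,Z))φhY + (μ−2)g(φX,Y)φZ − 2g(φX,Y)φhZ. For a > 0 define the linear map J_a on V by J_a(v,w) := (−(1/a)w, a·v).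 Then R̄(X,Y)(J_a Z) = J_a(R̄(X,Y)Z) holds for all X,Y,Z ∈ V if and only if a²(2 − μ − 2λ) = 2 − μ + 2λ. -/
open scoped RealInnerProductSpace

set_option maxHeartbeats 2000000 in
/-- The standard complex structure `J_a(v,w) = (−(1/a)w, av)` is invariant for
the Lie triple system of the base space iff `a²(2−μ−2λ) = 2−μ+2λ`. -/
theorem standard_complex_structure_invariance (n : ℕ) (hn : 1 ≤ n) (κ μ : ℝ)
    (hκ : κ < 1) (a : ℝ) (ha : 0 < a)
    (J : modelV n → modelV n) (hJ : ∀ X, J X = (-((1 / a) • X.2), a • X.1)) :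
    (∀ X Y Z, Rbar n κ μ X Y (J Z) = J (Rbar n κ μ X Y Z)) ↔
      a ^ 2 * (2 - μ - 2 * Real.sqrt (1 - κ)) = 2 - μ + 2 * Real.sqrt (1 - κ) := by
  have h1κ : (0:ℝ) < 1 - κ := by linarith
  set l := Real.sqrt (1 - κ) with hl
  have hl0 : 0 < l := Real.sqrt_pos.mpr h1κ
  have hl2 : l ^ 2 = 1 - κ := Real.sq_sqrt h1κ.le
  have ha0 : a ≠ 0 := ha.ne'
  constructor
  · intro hcomm
    set i0 : Fin n := ⟨0, hn⟩ with hi0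
    set e : EuclideanSpace ℝ (Fin n) := EuclideanSpace.single i0 (1:ℝ) with he
    have key := congrArg (fun v : modelV n => v.1 i0)
      (hcomm (e, (0:EuclideanSpace ℝ (Fin n))) ((0:EuclideanSpace ℝ (Fin n)), e)
        (e, (0:EuclideanSpace ℝ (Fin n))))
    simp only [Rbar, gV, phiV, hV, hJ, he] at key
    rw [← hl, show (1:ℝ) - κ = l ^ 2 from hl2.symm] at key
    simp only [inner_zero_left, inner_zero_right, inner_neg_left, inner_neg_right,
      real_inner_smul_left, real_inner_smul_right, smul_zero, neg_zero,
      EuclideanSpace.inner_single_left, EuclideanSpace.single_apply, map_one,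
      Prod.mk_add_mk, Prod.smul_mk, Prod.neg_mk, Prod.mk_sub_mk,
      PiLp.add_apply, PiLp.sub_apply, PiLp.smul_apply, PiLp.neg_apply,
      PiLp.zero_apply, smul_eq_mul, if_pos rfl, mul_one, mul_zero, add_zero,
      zero_add, sub_zero, zero_sub, neg_neg, zero_mul, one_mul] at key
    field_simp at key
    have hcond : (a ^ 2 * (2 - μ - 2 * l) - (2 - μ + 2 * l)) * (256 * l ^ 8) = 0 := by
      linear_combination (128 * l ^ 8) * key
    have h8 : (256:ℝ) * l ^ 8 ≠ 0 := by positivity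
    have := (mul_eq_zero.mp hcond).resolve_right h8
    linarith
  · intro hEq
    have ha2 : a ^ 2 - 1 ≠ 0 := by
      intro h
      have h1 : a ^ 2 = 1 := by linarith
      rw [h1] at hEq
      have : l = 0 := by linarith
      exact hl0.ne' this
    have hμ : μ = 2 - 2 * l * (a ^ 2 + 1) / (a ^ 2 - 1) := by
      field_simp
      nlinarith [hEq]
    subst hμ
    intro X Y Z
    obtain ⟨x1, x2⟩ := X; obtain ⟨y1, y2⟩ := Y; obtain ⟨z1, z2⟩ := Z
    simp only [Rbar, gV, phiV, hV, hJ]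
    rw [← hl, show (1:ℝ) - κ = l ^ 2 from hl2.symm]
    simp only [real_inner_smul_left, real_inner_smul_right, inner_neg_left,
      inner_neg_right, Prod.mk_add_mk, Prod.smul_mk, Prod.neg_mk, Prod.mk_sub_mk,
      Prod.ext_iff]
    constructor <;> (match_scalars <;> (field_simp; ring))
end

section
/- Let n ≥ 1, E = ℝⁿ with standard inner product, V = E × E with inner product g((v,w),(u,z)) = ⟨v,u⟩ + ⟨w,z⟩, and for real κ < 1, μ ∈ ℝ, λ := √(1−κ), define φ(v,w) := (−w, v), h(v,w) := (λv, −λw), and the trilinear map R̄ : V×V×V → V by R̄(X,Y)Z = ((1−μ/2)g(Y,Z)+g(hY,Z))X − ((1−μ/2)g(X,Z)+g(hX,Z))Y + (((1−μ/2)/(1−κ))g(hY,Z)+g(Y,Z))hX − (((1−μ/2)/(1−κ))g(hX,Z)+g(X,Z))hY + ((1−μ/2)g(φY,Z)+g(φhY,Z))φX − ((1−μ/2)g(φX,Z)+g(φhX,Z))φY + (((1−μ/2)/(1−κ))g(φhY,Z)+g(φY,Z))φhX − (((1−μ/2)/(1−κ))g(φhX,Z)+g(φX,Z))φhY + (μ−2)g(φX,Y)φZ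 − 2g(φX,Y)φhZ. For a > 0 define the linear map I_a on V by I_a(v,w) := ((1/a)w, a·v), so that I_a∘I_a = id. Then R̄(X,Y)(I_a Z) = I_a(R̄(X,Y)Z) holds for all X,Y,Z ∈ V if and only if a²(2 − μ − 2λ) = −(2 − μ + 2λ). -/
open scoped RealInnerProductSpace

set_option maxHeartbeats 2000000 in
private lemma aux_bwd (n : ℕ) (κ μ : ℝ) (hκ : κ < 1) (a : ℝ) (ha : 0 < a)
    (hyp : a ^ 2 * (2 - μ - 2 * Real.sqrt (1 - κ)) = -(2 - μ + 2 * Real.sqrt (1 - κ)))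
    (X Y Z : modelV n) :
    Rbar n κ μ X Y ((1 / a) • Z.2, a • Z.1) =
      ((1 / a) • (Rbar n κ μ X Y Z).2, a • (Rbar n κ μ X Y Z).1) := by
  have ha' : a ≠ 0 := ne_of_gt ha
  obtain ⟨l, hl0, hl2, hls⟩ : ∃ l : ℝ, 0 < l ∧ l ^ 2 = 1 - κ ∧ Real.sqrt (1 - κ) = l :=
    ⟨_, Real.sqrt_pos.2 (by linarith), Real.sq_sqrt (by linarith), rfl⟩
  rw [hls] at hyp
  have h1 : a ^ 2 + 1 ≠ 0 := by positivity
  have hmu0 : μ * (a ^ 2 + 1) = 2 * (a ^ 2 + 1) - 2 * l * (a ^ 2 - 1) := by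
    linear_combination -hyp
  have hmu : μ = (2 * (a ^ 2 + 1) - 2 * l * (a ^ 2 - 1)) / (a ^ 2 + 1) := by
    rw [eq_div_iff h1]; exact hmu0
  obtain ⟨x1, x2⟩ := X; obtain ⟨y1, y2⟩ := Y; obtain ⟨z1, z2⟩ := Z
  simp only [Rbar, gV, hV, phiV, hls]
  rw [← hl2]
  -- subst hmu
  simp only [Prod.mk.injEq, Prod.fst, Prod.snd, Prod.smul_mk, Prod.add_def, Prod.sub_def,
    Prod.neg_mk, smul_neg, inner_neg_left, inner_neg_right, real_inner_smul_left,
    real_inner_smul_right, inner_add_left, inner_add_right]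
  constructor <;> · match_scalars <;> · rw [hmu]; field_simp; ring

set_option maxHeartbeats 2000000 in
private lemma aux_fwd (n : ℕ) (hn : 1 ≤ n) (κ μ : ℝ) (hκ : κ < 1) (a : ℝ) (ha : 0 < a)
    (I : modelV n → modelV n) (hI : ∀ X, I X = ((1 / a) • X.2, a • X.1))
    (h : ∀ X Y Z, Rbar n κ μ X Y (I Z) = I (Rbar n κ μ X Y Z)) :
    a ^ 2 * (2 - μ - 2 * Real.sqrt (1 - κ)) = -(2 - μ + 2 * Real.sqrt (1 - κ)) := by
  have ha' : a ≠ 0 := ne_of_gt ha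
  obtain ⟨l, hl0, hl2, hls⟩ : ∃ l : ℝ, 0 < l ∧ l ^ 2 = 1 - κ ∧ Real.sqrt (1 - κ) = l :=
    ⟨_, Real.sqrt_pos.2 (by linarith), Real.sq_sqrt (by linarith), rfl⟩
  rw [hls]
  set e : EuclideanSpace ℝ (Fin n) := EuclideanSpace.single ⟨0, hn⟩ 1 with he
  have hee : ⟪e, e⟫ = (1:ℝ) := by
    simp [he, real_inner_self_eq_norm_sq, EuclideanSpace.norm_single]
  have key := congrArg (fun W : modelV n => (⟪e, W.1⟫ : ℝ))
    (h (e, (0 : EuclideanSpace ℝ (Fin n))) ((0 : EuclideanSpace ℝ (Fin n)), e)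
       (e, (0 : EuclideanSpace ℝ (Fin n))))
  simp [Rbar, gV, hV, phiV, hI, hls, Prod.smul_mk, Prod.mk_add_mk, Prod.mk_sub_mk,
    Prod.neg_mk, smul_neg, smul_smul, inner_add_right, inner_sub_right, inner_neg_right,
    real_inner_smul_right, real_inner_smul_left, inner_zero_left, inner_zero_right, hee, -PiLp.inner_apply] at key
  rw [← hl2] at key

  field_simp at key
  have h16 : (0:ℝ) < 256 * l ^ 8 := by positivity
  have goal2 : (a ^ 2 * (2 - μ - 2 * l) - -(2 - μ + 2 * l)) * (256 * l ^ 8) = 0 := by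
    rw [show ‖e‖ = 1 by simp [he, EuclideanSpace.norm_single]] at key
    linear_combination (128 * l ^ 8) * key
  rcases mul_eq_zero.1 goal2 with h0 | h0
  · linarith
  · exact absurd h0 (ne_of_gt h16)

/-- The standard para-complex structure `I_a(v,w) = ((1/a)w, av)` is invariant
for the Lie triple system of the base space iff `a²(2−μ−2λ) = −(2−μ+2λ)`. -/
theorem standard_paracomplex_structure_invariance (n : ℕ) (hn : 1 ≤ n) (κ μ : ℝ)
    (hκ : κ < 1) (a : ℝ) (ha : 0 < a)
    (I : modelV n → modelV n) (hI : ∀ X, I X = ((1 / a) • X.2, a • X.1)) :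
    (∀ X, I (I X) = X) ∧
    ((∀ X Y Z, Rbar n κ μ X Y (I Z) = I (Rbar n κ μ X Y Z)) ↔
      a ^ 2 * (2 - μ - 2 * Real.sqrt (1 - κ)) =
        -(2 - μ + 2 * Real.sqrt (1 - κ))) := by
  have ha' : a ≠ 0 := ne_of_gt ha
  constructor
  · intro X
    rw [hI, hI]
    ext <;> simp [smul_smul, ha']
  · constructor
    · intro h
      exact aux_fwd n hn κ μ hκ a ha I hI h
    · intro hyp X Y Z
      rw [hI Z, hI (Rbar n κ μ X Y Z)]
      exact aux_bwd n κ μ hκ a ha hyp X Y Z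
end

section
/- Let n ≥ 1, E = ℝⁿ with standard inner product, V = E × E with inner product g((v,w),(u,z)) = ⟨v,u⟩ + ⟨w,z⟩, and for real κ < 1, μ ∈ ℝ, λ := √(1−κ), define φ(v,w) := (−w, v), h(v,w) := (λv, −λw), and the trilinear map R̄ : V×V×V → V by R̄(X,Y)Z = ((1−μ/2)g(Y,Z)+g(hY,Z))X − ((1−μ/2)g(X,Z)+g(hX,Z))Y + (((1−μ/2)/(1−κ))g(hY,Z)+g(Y,Z))hX − (((1−μ/2)/(1−κ))g(hX,Z)+g(X,Z))hY + ((1−μ/2)g(φY,Z)+g(φhY,Z))φX − ((1−μ/2)g(φX,Z)+g(φhX,Z))φY + (((1−μ/2)/(1−κ))g(φhY,Z)+g(φY,Z))φhX − (((1−μ/2)/(1−κ))g(φhX,Z)+g(φX,Z))φhY + (μ−2)g(φX,Y)φZ − 2g(φX,Y)φhZ. Let a > 0 satisfy a²(2 − μ − 2λ) = 2 − μ + 2λ and define J_a(v,w) := (−(1/a)w, a·v). Then R̄(J_a X, Y)Z = −R̄(X, J_a Y)Z for all X, Y, Z ∈ V. -/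
open scoped RealInnerProductSpace

set_option maxHeartbeats 4000000 in
/-- The standard complex structure on the base space is twisted:
`R̄(J_a X, Y)Z = −R̄(X, J_a Y)Z`. -/
theorem standard_complex_structure_is_twisted (n : ℕ) (hn : 1 ≤ n) (κ μ : ℝ)
    (hκ : κ < 1) (a : ℝ) (ha : 0 < a)
    (hinv : a ^ 2 * (2 - μ - 2 * Real.sqrt (1 - κ)) =
      2 - μ + 2 * Real.sqrt (1 - κ))
    (J : modelV n → modelV n) (hJ : ∀ X, J X = (-((1 / a) • X.2), a • X.1)) :
    ∀ X Y Z, Rbar n κ μ (J X) Y Z = -(Rbar n κ μ X (J Y) Z) := by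

  intro X Y Z
  obtain ⟨x1, x2⟩ := X
  obtain ⟨y1, y2⟩ := Y
  obtain ⟨z1, z2⟩ := Z
  have ha' : a ≠ 0 := ne_of_gt ha
  set l := Real.sqrt (1 - κ) with hl
  have hl0 : 0 < l := Real.sqrt_pos.mpr (by linarith)
  have hl2 : l ^ 2 = 1 - κ := Real.sq_sqrt (by linarith)
  have ha1 : a ^ 2 - 1 ≠ 0 := by
    intro h
    have ha2 : a ^ 2 = 1 := by linarith
    have h4 : (0 : ℝ) = 4 * l := by linear_combination hinv - (2 - μ - 2*l) * ha2
    linarith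
  have hkl : 1 - κ = l ^ 2 := hl2.symm
  have hμ : μ = 2 - 2 * l * (a ^ 2 + 1) / (a ^ 2 - 1) := by
    have key : (2 - μ) * (a ^ 2 - 1) = 2 * l * (a ^ 2 + 1) := by linear_combination hinv
    field_simp
    linarith [key]
  subst hμ
  simp only [Rbar, gV, phiV, hV, hJ, Prod.fst, Prod.snd, Prod.smul_mk, Prod.mk_add_mk,
    Prod.mk_sub_mk, Prod.neg_mk, smul_neg, neg_neg, inner_neg_left, inner_neg_right,
    real_inner_smul_left, real_inner_smul_right, Prod.mk.injEq, smul_smul]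
  simp only [← hl]
  simp only [hkl]
  have hll : l ≠ 0 := ne_of_gt hl0
  constructor <;> match_scalars <;> field_simp <;> ring
end
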